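/- arXiv:2110.15519 — 2 statements merged into one kernel-verified Lean document; each statement's English description precedes it below -/
import Mathlib

section
/- Let H be a multigraph with at least 3 edges and let G = L(H) be its line graph. Then G is hamiltonian if and only if H has a dominating closed trail, i.e., a closed trail T such that every edge of H has at least one endpoint in V(T). -/
/-- A multigraph on vertex type `V` with edge type `E`: each edge is assigned an
unordered pair of endpoints (possibly equal, for loops). -/
structure Multigraph (V : Type*) (E : Type*) where
  inc : E → Sym2 V

namespace Multigraph

open scoped Classical

variable {V E : Type*} {M : Multigraph V E}

/-- Walks in a multigraph. -/
inductive Walk (M : Multigraph V E) : V → V → Type _ where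
  | nil (v : V) : Walk M v v
  | cons {u v w : V} (e : E) (h : M.inc e = s(u, v)) (p : Walk M v w) : Walk M u w

/-- The list of edges of a walk. -/
def Walk.edges : ∀ {u v : V}, M.Walk u v → List E
  | _, _, .nil _ => []
  | _, _, .cons e _ p => e :: p.edges

/-- The list of vertices visited by a walk, in order. -/
def Walk.support : ∀ {u v : V}, M.Walk u v → List V
  | _, v, .nil _ => [v]
  | u, _, .cons _ _ p => u :: p.support

/-- A trail is a walk with no repeated edge. -/
def Walk.IsTrail {u v : V} (p : M.Walk u v) : Prop := p.edges.Nodup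

/-- The interior vertices of a walk (all vertices except the two ends). -/
def Walk.interior {u v : V} (p : M.Walk u v) : List V := p.support.tail.dropLast

/-- Two vertices are reachable if joined by a walk. -/
def Reachable (M : Multigraph V E) (u v : V) : Prop := Nonempty (M.Walk u v)

/-- Reachability avoiding a set `R` of edges. -/
def ReachableOff (M : Multigraph V E) (R : Set E) (u v : V) : Prop :=
  ∃ p : M.Walk u v, ∀ e ∈ p.edges, e ∉ R

/-- A multigraph is connected if every two vertices are joined by a walk. -/
def Connected (M : Multigraph V E) : Prop := ∀ u v : V, M.Reachable u v

/-- A multigraph is `k`-edge-connected if it stays connected after the removal of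
any set of fewer than `k` edges. -/
def KEdgeConnected (M : Multigraph V E) (k : ℕ) : Prop :=
  ∀ R : Finset E, R.card < k → ∀ u v : V, M.ReachableOff (↑R) u v

/-- An edge-cut `R` is essential if after its removal two remaining edges lie in
different components. -/
def IsEssentialCut (M : Multigraph V E) (R : Finset E) : Prop :=
  ∃ (e f : E) (u v : V), e ∉ R ∧ f ∉ R ∧ u ∈ M.inc e ∧ v ∈ M.inc f ∧
    ¬ M.ReachableOff (↑R) u v

/-- A multigraph is essentially `k`-edge-connected if every essential edge-cut has
size at least `k`. -/
def EssentiallyKEdgeConnected (M : Multigraph V E) (k : ℕ) : Prop :=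
  ∀ R : Finset E, M.IsEssentialCut R → k ≤ R.card

/-- The line graph of a multigraph: vertices are the edges, adjacent when sharing
an endpoint. -/
def lineGraph (M : Multigraph V E) : SimpleGraph E where
  Adj e f := e ≠ f ∧ ∃ v : V, v ∈ M.inc e ∧ v ∈ M.inc f
  symm := by
    constructor
    rintro e f ⟨hne, v, hv1, hv2⟩
    exact ⟨hne.symm, v, hv2, hv1⟩
  loopless := by constructor; rintro e ⟨hne, -⟩; exact hne rfl

/-- The degree of a vertex: the number of edge-ends at it (loops count twice). -/
noncomputable def degree (M : Multigraph V E) [Fintype E] (v : V) : ℕ :=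
  ∑ e : E, Sym2.lift ⟨fun a b => (if a = v then 1 else 0) + (if b = v then 1 else 0),
    fun a b => by ring⟩ (M.inc e)

/-- A pendant edge: an edge with an endpoint of degree `1`. -/
def IsPendant (M : Multigraph V E) [Fintype E] (e : E) : Prop :=
  ∃ v : V, v ∈ M.inc e ∧ M.degree v = 1

/-- A closed trail whose vertex set dominates every edge. -/
def HasDominatingClosedTrail (M : Multigraph V E) : Prop :=
  ∃ (v : V) (p : M.Walk v v), p.IsTrail ∧
    ∀ e : E, ∃ x : V, x ∈ M.inc e ∧ x ∈ p.support

/-- A closed trail through every vertex. -/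
def HasSpanningClosedTrail (M : Multigraph V E) : Prop :=
  ∃ (v : V) (p : M.Walk v v), p.IsTrail ∧ ∀ x : V, x ∈ p.support

/-- An internally dominating `(e₁,e₂)`-trail: a trail with first edge `e₁` and last
edge `e₂` whose interior vertices dominate every edge. -/
def HasIDT (M : Multigraph V E) (e₁ e₂ : E) : Prop :=
  ∃ (u v : V) (p : M.Walk u v), p.IsTrail ∧
    p.edges.head? = some e₁ ∧ p.edges.getLast? = some e₂ ∧
    ∀ e : E, ∃ x : V, x ∈ M.inc e ∧ x ∈ p.interior

end Multigraph

section Aux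

namespace Multigraph

variable {V E : Type*} {M : Multigraph V E}

@[simp] lemma Walk.support_nil' (v : V) : (Walk.nil (M := M) v).support = [v] := rfl

@[simp] lemma Walk.support_cons' {u v w : V} (e : E) (h : M.inc e = s(u, v))
    (p : M.Walk v w) : (Walk.cons e h p).support = u :: p.support := rfl

@[simp] lemma Walk.edges_nil' (v : V) : (Walk.nil (M := M) v).edges = [] := rfl

@[simp] lemma Walk.edges_cons' {u v w : V} (e : E) (h : M.inc e = s(u, v))
    (p : M.Walk v w) : (Walk.cons e h p).edges = e :: p.edges := rfl

lemma Walk.start_mem_support : ∀ {u v : V} (p : M.Walk u v), u ∈ p.support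
  | _, _, .nil _ => List.mem_singleton.2 rfl
  | _, _, .cons _ _ _ => List.mem_cons_self

lemma Walk.eq_of_edges_eq_nil : ∀ {u v : V} (p : M.Walk u v), p.edges = [] → u = v
  | _, _, .nil _, _ => rfl
  | _, _, .cons _ _ _, h' => by simp at h'

/-- Build a trail in `M` out of a list of edges in which consecutive edges share a
vertex, starting at a given endpoint of the first edge and ending at a given
endpoint of the last edge. -/
lemma exists_trail_of_chain (M : Multigraph V E) :
    ∀ (L : List E) (w z : V), L ≠ [] →
      List.Chain' (fun e f => ∃ x, x ∈ M.inc e ∧ x ∈ M.inc f) L →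
      (∀ e ∈ L.head?, w ∈ M.inc e) → (∀ e ∈ L.getLast?, z ∈ M.inc e) →
      ∃ p : M.Walk w z, p.edges.Sublist L ∧
        ∀ e ∈ L, ∃ x, x ∈ M.inc e ∧ x ∈ p.support := by
  intro L
  induction L with
  | nil => intro w z h; exact absurd rfl h
  | cons e L ih =>
    intro w z _ hch hhd hlast
    have hwe : w ∈ M.inc e := hhd e rfl
    cases L with
    | nil =>
      have hze : z ∈ M.inc e := hlast e rfl
      by_cases hwz : w = z
      · subst hwz
        refine ⟨.nil w, by simp, ?_⟩
        intro f hf; simp at hf; subst hf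
        exact ⟨w, hwe, by simp⟩
      · have hinc : M.inc e = s(w, z) := (Sym2.mem_and_mem_iff hwz).1 ⟨hwe, hze⟩
        refine ⟨.cons e hinc (.nil z), by simp, ?_⟩
        intro f hf; simp at hf; subst hf
        exact ⟨w, hwe, by simp⟩
    | cons f L' =>
      rw [List.Chain', List.isChain_cons_cons] at hch
      obtain ⟨⟨x, hxe, hxf⟩, hch'⟩ := hch
      have hlast' : ∀ e' ∈ (f :: L').getLast?, z ∈ M.inc e' := by
        intro e' he'; exact hlast e' (by rwa [List.getLast?_cons_cons])
      obtain ⟨p, hsub, hdom⟩ := ih x z (by simp) hch'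
        (by intro e' he'; simp at he'; subst he'; exact hxf) hlast'
      by_cases hwx : w = x
      · subst hwx
        refine ⟨p, hsub.trans (List.sublist_cons_self _ _), ?_⟩
        intro g hg
        rcases List.mem_cons.1 hg with rfl | hg
        · exact ⟨_, hxe, p.start_mem_support⟩
        · exact hdom g hg
      · have hinc : M.inc e = s(w, x) := (Sym2.mem_and_mem_iff hwx).1 ⟨hwe, hxe⟩
        refine ⟨.cons e hinc p, hsub.cons_cons e, ?_⟩
        intro g hg
        rcases List.mem_cons.1 hg with rfl | hg
        · exact ⟨w, hwe, by simp⟩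
        · obtain ⟨y, hy1, hy2⟩ := hdom g hg
          exact ⟨y, hy1, by simp [hy2]⟩

open Classical in
/-- From a trail and a list of extra edges dominated by the trail, build one list
containing all of them in which consecutive edges share a vertex, starting at an
edge through the start vertex and ending at an edge through the end vertex. -/
lemma exists_cyclic_list (M : Multigraph V E) :
    ∀ {u w : V} (p : M.Walk u w) (S : List E),
      (∀ f ∈ S, ∃ x, x ∈ M.inc f ∧ x ∈ p.support) →
      ∃ O : List E, O.Perm (S ++ p.edges) ∧
        List.Chain' (fun e f => ∃ x, x ∈ M.inc e ∧ x ∈ M.inc f) O ∧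
        (∀ e ∈ O.head?, u ∈ M.inc e) ∧ (∀ e ∈ O.getLast?, w ∈ M.inc e) := by
  intro u w p
  induction p with
  | nil v =>
    intro S hS
    have hv : ∀ f ∈ S, v ∈ M.inc f := by
      intro f hf; obtain ⟨x, hx1, hx2⟩ := hS f hf
      simp at hx2; subst hx2; exact hx1
    refine ⟨S, by simp, ?_, ?_, ?_⟩
    · exact List.Pairwise.isChain
        (List.pairwise_of_forall_mem_list fun a ha b hb => ⟨v, hv a ha, hv b hb⟩)
    · intro g hg; exact hv g (List.mem_of_mem_head? hg)
    · intro g hg; exact hv g (List.mem_of_getLast? hg)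
  | cons e h q ih =>
    rename_i u v w
    intro S hS
    set S1 := S.filter (fun f => decide (u ∈ M.inc f)) with hS1def
    set S2 := S.filter (fun f => !decide (u ∈ M.inc f)) with hS2def
    have hS1 : ∀ f ∈ S1, u ∈ M.inc f := by
      intro f hf
      have := List.of_mem_filter hf
      simpa using this
    have hS2 : ∀ f ∈ S2, f ∈ S ∧ u ∉ M.inc f := by
      intro f hf
      refine ⟨List.mem_of_mem_filter hf, ?_⟩
      have := List.of_mem_filter hf
      simpa using this
    have hS2dom : ∀ f ∈ S2, ∃ x, x ∈ M.inc f ∧ x ∈ q.support := by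
      intro f hf
      obtain ⟨hfS, hfu⟩ := hS2 f hf
      obtain ⟨x, hx1, hx2⟩ := hS f hfS
      simp only [Walk.support_cons', List.mem_cons] at hx2
      rcases hx2 with rfl | hx2
      · exact absurd hx1 hfu
      · exact ⟨x, hx1, hx2⟩
    obtain ⟨O₂, hperm, hch, hhd, hlast⟩ := ih S2 hS2dom
    have hue : u ∈ M.inc e := by rw [h]; simp
    have hve : v ∈ M.inc e := by rw [h]; simp
    refine ⟨S1 ++ e :: O₂, ?_, ?_, ?_, ?_⟩
    · -- permutation
      refine (List.Perm.append_left S1 (hperm.cons e)).trans ?_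
      refine (List.Perm.append_left S1 List.perm_middle.symm).trans ?_
      rw [← List.append_assoc]
      simp only [Walk.edges_cons']
      exact List.Perm.append_right _ (List.filter_append_perm _ S)
    · -- chain
      have hchS1 : List.Chain' (fun e f => ∃ x, x ∈ M.inc e ∧ x ∈ M.inc f) S1 :=
        List.Pairwise.isChain
          (List.pairwise_of_forall_mem_list fun a ha b hb => ⟨u, hS1 a ha, hS1 b hb⟩)
      have hchO : List.Chain' (fun e f => ∃ x, x ∈ M.inc e ∧ x ∈ M.inc f) (e :: O₂) :=
        List.isChain_cons.2 ⟨fun y hy => ⟨v, hve, hhd y hy⟩, hch⟩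
      refine hchS1.append hchO ?_
      intro a ha b hb
      simp only [List.head?_cons, Option.mem_some_iff] at hb
      subst hb
      exact ⟨u, hS1 a (List.mem_of_getLast? ha), hue⟩
    · -- head
      intro g hg
      cases hc1 : S1 with
      | nil =>
        rw [hc1, List.nil_append, List.head?_cons, Option.mem_some_iff] at hg
        exact hg ▸ hue
      | cons a t =>
        rw [hc1, List.cons_append, List.head?_cons, Option.mem_some_iff] at hg
        exact hg ▸ hS1 a (by rw [hc1]; exact List.mem_cons_self)
    · -- last
      intro g hg
      rw [List.getLast?_append_of_ne_nil _ (by simp)] at hg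
      cases hO₂ : O₂ with
      | nil =>
        rw [hO₂] at hperm hg
        simp only [List.getLast?_singleton, Option.mem_some_iff] at hg
        have hqe : q.edges = [] := (List.append_eq_nil_iff.1 hperm.symm.eq_nil).2
        have hvw : v = w := q.eq_of_edges_eq_nil hqe
        exact hg ▸ (hvw ▸ hve)
      | cons a t =>
        rw [hO₂, List.getLast?_cons_cons] at hg
        exact hlast g (by rw [hO₂]; exact hg)

end Multigraph

/-- Build a walk in a simple graph from a chain of adjacent vertices. -/
lemma SimpleGraph.walk_of_chain {α : Type*} {G : SimpleGraph α} :
    ∀ (l : List α) (a b : α), List.Chain G.Adj a l → l.getLast? = some b →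
      ∃ p : G.Walk a b, p.support = a :: l := by
  intro l
  induction l with
  | nil => intro a b _ h; simp at h
  | cons f l ih =>
    intro a b hch hlast
    rw [List.Chain, List.isChain_cons_cons] at hch
    cases l with
    | nil =>
      simp only [List.getLast?_singleton, Option.some.injEq] at hlast
      subst hlast
      exact ⟨SimpleGraph.Walk.cons hch.1 SimpleGraph.Walk.nil, rfl⟩
    | cons g l' =>
      rw [List.getLast?_cons_cons] at hlast
      obtain ⟨p, hp⟩ := ih f b hch.2 hlast
      exact ⟨SimpleGraph.Walk.cons hch.1 p, by simp [hp]⟩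

/-- In a walk whose start vertex is not repeated, any edge through the start vertex
is the first edge. -/
lemma SimpleGraph.edge_head {α : Type*} {G : SimpleGraph α} {u z : α} (p : G.Walk u z)
    (hu : u ∉ p.support.tail) {d : Sym2 α} (hd : d ∈ p.edges) (hud : u ∈ d) :
    ∃ y, d = s(u, y) ∧ p.support.tail.head? = some y := by
  cases p with
  | nil => simp at hd
  | @cons _ x _ h q =>
    rw [SimpleGraph.Walk.edges_cons] at hd
    rcases List.mem_cons.1 hd with rfl | hd
    · refine ⟨x, rfl, ?_⟩
      simp only [SimpleGraph.Walk.support_cons, List.tail_cons]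
      rw [q.support_eq_cons]; rfl
    · exfalso
      apply hu
      simp only [SimpleGraph.Walk.support_cons, List.tail_cons]
      induction d using Sym2.ind with
      | _ a b =>
        rcases Sym2.mem_iff.1 hud with rfl | rfl
        · exact q.fst_mem_support_of_mem_edges hd
        · exact q.snd_mem_support_of_mem_edges hd

/-- Build a Hamiltonian cycle from a cyclic list of all vertices with consecutive
members adjacent. -/
lemma SimpleGraph.ham_of_list {α : Type*} [DecidableEq α] {G : SimpleGraph α}
    (e f : α) (O'' : List α) (hnd : (e :: f :: O'').Nodup)
    (hall : ∀ a : α, a ∈ e :: f :: O'') (hO'' : O'' ≠ [])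
    (hch : List.Chain' G.Adj (e :: f :: O''))
    (hadj : G.Adj ((f :: O'').getLast (by simp)) e) :
    ∃ p : G.Walk e e, p.IsHamiltonianCycle := by
  have hef : G.Adj e f := (List.isChain_cons_cons.1 hch).1
  have hch2 : List.Chain' G.Adj (f :: O'') := (List.isChain_cons_cons.1 hch).2
  -- chain from f through O'' and back to e
  have hchApp : List.Chain' G.Adj ((f :: O'') ++ [e]) := by
    refine hch2.append (List.isChain_singleton e) ?_
    intro a ha b hb
    simp only [List.head?_cons, Option.mem_some_iff] at hb
    subst hb
    rw [List.getLast?_eq_getLast (by simp), Option.mem_some_iff] at ha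
    exact ha ▸ hadj
  have hchain : List.Chain G.Adj f (O'' ++ [e]) := by
    rw [List.cons_append] at hchApp
    exact hchApp
  obtain ⟨p₂, hp₂⟩ := SimpleGraph.walk_of_chain (O'' ++ [e]) f e hchain
    List.getLast?_concat
  -- basic nodup facts
  have hef' : e ∉ f :: O'' := by
    simp only [List.nodup_cons] at hnd; exact hnd.1
  have hfO : f ∉ O'' := by
    simp only [List.nodup_cons] at hnd; exact hnd.2.1
  have hndO : O''.Nodup := by
    simp only [List.nodup_cons] at hnd; exact hnd.2.2
  have hpath : p₂.IsPath := by
    apply SimpleGraph.Walk.IsPath.mk'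
    rw [hp₂]
    have hperm : (f :: (O'' ++ [e])).Perm (e :: f :: O'') :=
      List.perm_append_singleton e (f :: O'')
    exact hperm.nodup_iff.2 hnd
  have hne : s(e, f) ∉ p₂.edges := by
    intro hmem
    have htail : p₂.support.tail = O'' ++ [e] := by rw [hp₂]; rfl
    have hfnot : f ∉ p₂.support.tail := by
      rw [htail]
      simp only [List.mem_append, List.mem_singleton]
      rintro (hf | rfl)
      · exact hfO hf
      · exact hef' (List.mem_cons_self)
    obtain ⟨y, hy1, hy2⟩ := SimpleGraph.edge_head p₂ hfnot hmem (by simp)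
    have hye : y = e := by
      rw [Sym2.eq_iff] at hy1
      rcases hy1 with ⟨h1, _⟩ | ⟨h1, _⟩
      · exact absurd h1 hef.ne
      · exact h1.symm
    rw [hye] at hy2
    rw [htail] at hy2
    cases O'' with
    | nil => exact hO'' rfl
    | cons o t =>
      simp only [List.cons_append, List.head?_cons, Option.some.injEq] at hy2
      apply hef'
      rw [← hy2]
      exact List.mem_cons_of_mem _ (List.mem_cons_self)
  refine ⟨SimpleGraph.Walk.cons hef p₂, ?_⟩
  rw [SimpleGraph.Walk.isHamiltonianCycle_iff_isCycle_and_support_count_tail_eq_one]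
  constructor
  · exact (SimpleGraph.Walk.cons_isCycle_iff p₂ hef).2 ⟨hpath, hne⟩
  · intro a
    have htail : (SimpleGraph.Walk.cons hef p₂).support.tail = f :: (O'' ++ [e]) := by
      rw [SimpleGraph.Walk.support_cons, List.tail_cons, hp₂]
    rw [htail]
    have hperm : (f :: (O'' ++ [e])).Perm (e :: f :: O'') :=
      List.perm_append_singleton e (f :: O'')
    rw [hperm.count_eq]
    exact List.count_eq_one_of_mem hnd (hall a)

/-- Combine two chains on the same list. -/
lemma List.chain'_and_of_chain' {α : Type*} {R S : α → α → Prop} {l : List α}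
    (hR : List.Chain' R l) (hS : List.Chain' S l) :
    List.Chain' (fun a b => R a b ∧ S a b) l := by
  rw [List.Chain', List.isChain_iff_getElem] at hR hS ⊢
  exact fun i h => ⟨hR i h, hS i h⟩

end Aux

/-- For a multigraph `H` with at least `3` edges, the line graph `L(H)` is
hamiltonian if and only if `H` has a dominating closed trail. -/
theorem stmt4 {V E : Type*} [Fintype E] [DecidableEq E] (M : Multigraph V E)
    (hE : 3 ≤ Fintype.card E) :
    (M.lineGraph).IsHamiltonian ↔ M.HasDominatingClosedTrail := by
  classical
  constructor
  · -- Hamiltonian line graph gives dominating closed trail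
    intro hham
    obtain ⟨a, c, hc⟩ := hham (by omega)
    have hcount : ∀ b : E, c.support.tail.count b = 1 :=
      ((SimpleGraph.Walk.isHamiltonianCycle_iff_isCycle_and_support_count_tail_eq_one).1 hc).2
    have hmem : ∀ b : E, b ∈ c.support.tail := by
      intro b
      rw [← List.count_pos_iff, hcount b]
      norm_num
    have hnd : c.support.tail.Nodup :=
      List.nodup_iff_count_le_one.2 fun b => le_of_eq (hcount b)
    have hsupp : c.support = a :: c.support.tail := c.support_eq_cons
    cases hL : c.support.tail with
    | nil => exact absurd (hmem a) (by simp [hL])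
    | cons f L' =>
      have hchain : List.Chain (M.lineGraph).Adj a (f :: L') := by
        have h1 := c.isChain_adj_support
        rw [hsupp, hL] at h1
        exact h1
      rw [List.Chain, List.isChain_cons_cons] at hchain
      obtain ⟨⟨hne, x, hxa, hxf⟩, hch⟩ := hchain
      have hlastL : (f :: L').getLast? = some a := by
        have h2 : c.support.getLast? = some a := by
          rw [List.getLast?_eq_getLast (by rw [hsupp]; simp), c.getLast_support]
        rw [hsupp, hL, List.getLast?_cons_cons] at h2
        exact h2
      have hchsh : List.Chain' (fun e f => ∃ y, y ∈ M.inc e ∧ y ∈ M.inc f) (f :: L') :=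
        List.IsChain.imp (fun ⦃_ _⦄ h => h.2) (show List.Chain' (M.lineGraph).Adj (f :: L') from hch)
      obtain ⟨p, hsub, hdom⟩ := M.exists_trail_of_chain (f :: L') x x (by simp) hchsh
        (by intro e' he'; simp at he'; subst he'; exact hxf)
        (by intro e' he'; rw [hlastL] at he'; simp at he'; subst he'; exact hxa)
      rw [hL] at hnd hmem
      exact ⟨x, p, hnd.sublist hsub, fun e => hdom e (hmem e)⟩
  · -- dominating closed trail gives Hamiltonian line graph
    rintro ⟨v, p, htr, hdom⟩
    intro _
    set S := Finset.univ.toList.filter (fun f => decide (f ∉ p.edges)) with hSdef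
    have hSmem : ∀ f, f ∈ S ↔ f ∉ p.edges := by
      intro f
      rw [hSdef, List.mem_filter]
      simp [Finset.mem_toList]
    have hSnd : S.Nodup := (Finset.nodup_toList _).filter _
    obtain ⟨O, hperm, hch, hhd, hlast⟩ := M.exists_cyclic_list p S (fun f _ => hdom f)
    have hndSE : (S ++ p.edges).Nodup := by
      rw [List.nodup_append]
      exact ⟨hSnd, htr, fun f hf b hb hfb => (hSmem f).1 hf (hfb ▸ hb)⟩
    have hndO : O.Nodup := hperm.nodup_iff.2 hndSE
    have hallO : ∀ e : E, e ∈ O := by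
      intro e
      rw [hperm.mem_iff, List.mem_append]
      by_cases he : e ∈ p.edges
      · exact Or.inr he
      · exact Or.inl ((hSmem e).2 he)
    have htf : O.toFinset = Finset.univ := Finset.eq_univ_iff_forall.2 (by simp [hallO])
    have hlen : O.length = Fintype.card E := by
      rw [← List.toFinset_card_of_nodup hndO, htf, Finset.card_univ]
    obtain ⟨e, f, O'', rfl⟩ : ∃ e f O'', O = e :: f :: O'' := by
      cases O with
      | nil => simp at hlen; omega
      | cons e t =>
        cases t with
        | nil => simp at hlen; omega
        | cons f O'' => exact ⟨e, f, O'', rfl⟩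
    have hO'' : O'' ≠ [] := by
      intro h
      rw [h] at hlen
      simp at hlen
      omega
    have hve : v ∈ M.inc e := hhd e rfl
    set b := (f :: O'').getLast (by simp) with hbdef
    have hlastO : (e :: f :: O'').getLast? = some b := by
      rw [List.getLast?_cons_cons, List.getLast?_eq_getLast (by simp)]
    have hvb : v ∈ M.inc b := hlast b hlastO
    have hbmem : b ∈ f :: O'' := List.getLast_mem _
    have hbne : b ≠ e := by
      rintro rfl
      exact (List.nodup_cons.1 hndO).1 hbmem
    have hadj : (M.lineGraph).Adj b e := ⟨hbne, v, hvb, hve⟩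
    have hchne : List.Chain' (fun a b : E => a ≠ b) (e :: f :: O'') :=
      List.Pairwise.isChain hndO
    have hchAdj : List.Chain' (M.lineGraph).Adj (e :: f :: O'') :=
      List.IsChain.imp (fun ⦃_ _⦄ h => ⟨h.1, h.2⟩) (List.chain'_and_of_chain' hchne hch)
    obtain ⟨c, hc⟩ := SimpleGraph.ham_of_list e f O'' hndO hallO hO'' hchAdj hadj
    exact ⟨e, c, hc⟩
end

section
/- If a connected multigraph H has a spanning closed trail and at least 3 edges, then its line graph L(H) is hamiltonian. -/
section Aux

/-! ### Building a walk in a simple graph from a chain of adjacent vertices -/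

def SimpleGraph.walkFromChain {α : Type*} (G : SimpleGraph α) :
    ∀ (a : α) (l : List α), List.Chain G.Adj a l → G.Walk a (l.getLastD a)
  | _, [], _ => SimpleGraph.Walk.nil
  | a, b :: l, h =>
    (SimpleGraph.Walk.cons (List.chain_cons.mp h).1
      (SimpleGraph.walkFromChain G b l (List.chain_cons.mp h).2)).copy rfl
      List.getLastD_cons.symm

lemma SimpleGraph.support_walkFromChain {α : Type*} (G : SimpleGraph α) :
    ∀ (a : α) (l : List α) (h : List.Chain G.Adj a l),
      (G.walkFromChain a l h).support = a :: l
  | _, [], _ => rfl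
  | a, b :: l, h => by
    simp [SimpleGraph.walkFromChain, SimpleGraph.support_walkFromChain G b l]
    exact SimpleGraph.support_walkFromChain G b l _

lemma getLastD_eq_getLast' {α : Type*} :
    ∀ (l : List α) (hne : l ≠ []) (a : α), l.getLastD a = l.getLast hne
  | [b], _, a => rfl
  | b :: c :: t, _, a => by
    rw [List.getLastD_cons, getLastD_eq_getLast' (c :: t) (by simp) b]
    exact (List.getLast_cons (by simp)).symm

lemma getLast_ne_head' {α : Type*} :
    ∀ (L : List α), L.Nodup → 2 ≤ L.length → ∀ (h : L ≠ []), L.getLast h ≠ L.head h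
  | a :: b :: l, hnd, _, h => by
    rw [List.head_cons, List.getLast_cons (by simp : (b :: l) ≠ [])]
    intro hEq
    have hmem : a ∈ b :: l := hEq ▸ List.getLast_mem (by simp)
    exact (List.nodup_cons.mp hnd).1 hmem

/-- A nodup list of all vertices, of length at least 3, forming a cycle of
adjacent vertices, yields a Hamiltonian graph. -/
lemma SimpleGraph.isHamiltonian_of_list {α : Type*} [Fintype α] [DecidableEq α]
    (G : SimpleGraph α) (L : List α)
    (hnd : L.Nodup) (hall : ∀ x : α, x ∈ L) (hlen : 3 ≤ L.length)
    (hchain : L.Chain' G.Adj)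
    (hcyc : ∀ h : L ≠ [], G.Adj (L.getLast h) (L.head h)) :
    G.IsHamiltonian := by
  match L, hnd, hall, hlen, hchain, hcyc with
  | x :: b :: c :: rest, hnd, hall, _, hchain, hcyc =>
  set t : List α := c :: rest with ht
  have htne : t ≠ [] := by simp [ht]
  have hxb : G.Adj x b := List.isChain_cons_cons.mp hchain |>.1
  have hcb : List.Chain G.Adj b t := List.isChain_cons_cons.mp hchain |>.2
  -- nodup facts
  have hxnot : x ∉ b :: t := (List.nodup_cons.mp hnd).1
  have hnd' : (b :: t).Nodup := (List.nodup_cons.mp hnd).2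
  have hbnot : b ∉ t := (List.nodup_cons.mp hnd').1
  -- the path from b to the last vertex
  let q : G.Walk b (t.getLastD b) := G.walkFromChain b t hcb
  have hsupq : q.support = b :: t := G.support_walkFromChain b t hcb
  have hLne : (x :: b :: t) ≠ [] := by simp
  have hlastadj : G.Adj (t.getLastD b) x := by
    have := hcyc hLne
    rw [List.head_cons] at this
    have hgl : (x :: b :: t).getLast hLne = t.getLastD b := by
      rw [List.getLast_cons (by simp : (b :: t) ≠ []), List.getLast_cons htne,
        getLastD_eq_getLast' t htne b]
    rwa [hgl] at this
  let p : G.Walk b x := q.concat hlastadj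
  have hsupp : p.support = (b :: t) ++ [x] := by
    show (q.concat hlastadj).support = _
    rw [SimpleGraph.Walk.support_concat, hsupq]
  have hp : p.IsPath := by
    apply SimpleGraph.Walk.IsPath.mk'
    rw [hsupp, List.nodup_append]
    refine ⟨hnd', List.nodup_singleton x, ?_⟩
    intro a ha y hy hay
    rw [List.mem_singleton] at hy
    rw [hay, hy] at ha
    exact hxnot ha
  have he : s(x, b) ∉ p.edges := by
    intro hmem
    have : p.edges = q.edges ++ [s(t.getLastD b, x)] := by
      show (q.concat hlastadj).edges = _
      rw [SimpleGraph.Walk.edges_concat, List.concat_eq_append]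
    rw [this, List.mem_append, List.mem_singleton] at hmem
    rcases hmem with hmem | hmem
    · have : x ∈ q.support := q.fst_mem_support_of_mem_edges hmem
      rw [hsupq] at this
      exact hxnot this
    · rw [Sym2.eq_iff] at hmem
      rcases hmem with ⟨h1, h2⟩ | ⟨h1, h2⟩
      · exact hxnot (by rw [← h2]; exact List.mem_cons_self)
      · have : t.getLastD b ∈ t := by
          rw [getLastD_eq_getLast' t htne b]; exact List.getLast_mem htne
        rw [← h2] at this
        exact hbnot this
  let cyc : G.Walk x x := SimpleGraph.Walk.cons hxb p
  have hcycle : cyc.IsCycle := (SimpleGraph.Walk.cons_isCycle_iff p hxb).mpr ⟨hp, he⟩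
  intro _
  refine ⟨x, cyc, ?_⟩
  rw [SimpleGraph.Walk.isHamiltonianCycle_iff_isCycle_and_support_count_tail_eq_one]
  refine ⟨hcycle, fun a => ?_⟩
  have hsupcyc : cyc.support = x :: ((b :: t) ++ [x]) := by
    show (SimpleGraph.Walk.cons hxb p).support = _
    rw [SimpleGraph.Walk.support_cons, hsupp]
  rw [hsupcyc, List.tail_cons, List.count_append]
  by_cases hax : a = x
  · subst hax
    rw [List.count_eq_zero_of_not_mem hxnot, List.count_singleton]
    simp
  · have hmem : a ∈ b :: t := by
      have := hall a
      rcases List.mem_cons.mp this with h | h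
      · exact absurd h hax
      · exact h
    rw [List.count_eq_one_of_mem hnd' hmem, List.count_eq_zero_of_not_mem (by simpa using hax)]

end Aux

namespace Multigraph

open scoped Classical

variable {V E : Type*} {M : Multigraph V E}

/-- The relation of two edges sharing an endpoint. -/
def Share (M : Multigraph V E) (e f : E) : Prop := ∃ y : V, y ∈ M.inc e ∧ y ∈ M.inc f

lemma filter_not_perm {α : Type*} (P : α → Prop) [DecidablePred P] (S : List α) :
    (S.filter (fun a => P a) ++ S.filter (fun a => ¬ P a)).Perm S := by
  induction S with
  | nil => simp
  | cons a S ih =>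
    by_cases h : P a
    · rw [List.filter_cons_of_pos (by simpa using h), List.filter_cons_of_neg (by simpa using h)]
      exact ih.cons a
    · rw [List.filter_cons_of_neg (by simpa using h), List.filter_cons_of_pos (by simpa using h)]
      exact List.perm_middle.trans (ih.cons a)

/-- Insert the non-trail edges into the trail, each at its first incident vertex. -/
noncomputable def buildList (M : Multigraph V E) : ∀ {u w : V}, M.Walk u w → List E → List E
  | _, _, .nil _, S => S
  | u, _, .cons e _ p, S =>
      S.filter (fun f => u ∈ M.inc f) ++ e :: M.buildList p (S.filter (fun f => u ∉ M.inc f))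

lemma buildList_perm (M : Multigraph V E) :
    ∀ {u w : V} (p : M.Walk u w) (S : List E), (M.buildList p S).Perm (p.edges ++ S)
  | _, _, .nil _, S => by simp [buildList, Walk.edges]
  | u, _, .cons e h p, S => by
    rw [buildList, Walk.edges]
    refine List.perm_middle.trans (List.Perm.cons e ?_)
    refine (List.Perm.append_left _ (M.buildList_perm p _)).trans ?_
    rw [← List.append_assoc]
    refine (List.Perm.append_right _ List.perm_append_comm).trans ?_
    rw [List.append_assoc]
    refine List.Perm.append_left _ ?_
    exact filter_not_perm (fun f => u ∈ M.inc f) S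

lemma buildList_head (M : Multigraph V E) :
    ∀ {u w : V} (p : M.Walk u w) (S : List E),
      (∀ f ∈ S, ∃ y, y ∈ M.inc f ∧ y ∈ p.support) →
      ∀ x, (M.buildList p S).head? = some x → u ∈ M.inc x
  | _, _, .nil v, S, hS, x, hx => by
    have hxS : x ∈ S := by
      cases S with
      | nil => simp [buildList] at hx
      | cons a S => rw [buildList] at hx; simp at hx; simp [hx]
    obtain ⟨y, hy1, hy2⟩ := hS x hxS
    simp [Walk.support] at hy2
    rwa [hy2] at hy1
  | u, _, .cons e h p, S, hS, x, hx => by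
    rw [buildList] at hx
    cases hA : S.filter (fun f => u ∈ M.inc f) with
    | nil =>
      rw [hA, List.nil_append, List.head?_cons] at hx
      cases hx
      rw [h]
      exact Sym2.mem_mk_left _ _
    | cons a A =>
      rw [hA, List.cons_append, List.head?_cons] at hx
      cases hx
      have : x ∈ S.filter (fun f => u ∈ M.inc f) := by rw [hA]; exact List.mem_cons_self
      exact of_decide_eq_true (List.mem_filter.mp this).2

lemma buildList_getLast (M : Multigraph V E) :
    ∀ {u w : V} (p : M.Walk u w) (S : List E),
      (∀ f ∈ S, ∃ y, y ∈ M.inc f ∧ y ∈ p.support) →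
      ∀ x, (M.buildList p S).getLast? = some x → w ∈ M.inc x
  | _, _, .nil v, S, hS, x, hx => by
    have hxS : x ∈ S := by
      rw [buildList] at hx
      obtain ⟨h1, h2⟩ := List.mem_getLast?_eq_getLast hx
      rw [h2]; exact List.getLast_mem h1
    obtain ⟨y, hy1, hy2⟩ := hS x hxS
    simp [Walk.support] at hy2
    rwa [hy2] at hy1
  | u, _, .cons e h p, S, hS, x, hx => by
    rw [buildList, List.getLast?_append_cons] at hx
    cases hB : M.buildList p (S.filter (fun f => u ∉ M.inc f)) with
    | nil =>
      rw [hB] at hx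
      simp at hx
      subst hx
      have hpe : p.edges = [] := by
        have hperm := M.buildList_perm p (S.filter (fun f => u ∉ M.inc f))
        rw [hB] at hperm
        have := hperm.symm.eq_nil
        exact (List.append_eq_nil_iff.mp this).1
      cases p with
      | nil v =>
        rw [h]
        exact Sym2.mem_mk_right _ _
      | cons e' h' p' => simp [Walk.edges] at hpe
    | cons b B =>
      have hx' : (M.buildList p (S.filter (fun f => u ∉ M.inc f))).getLast? = some x := by
        rw [hB, List.getLast?_cons_cons] at hx
        rw [hB]
        exact hx
      refine M.buildList_getLast p _ ?_ x hx'
      intro f hf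
      obtain ⟨y, hy1, hy2⟩ := hS f (List.mem_of_mem_filter hf)
      refine ⟨y, hy1, ?_⟩
      have hnu : u ∉ M.inc f := of_decide_eq_true (List.mem_filter.mp hf).2
      simp [Walk.support] at hy2
      rcases hy2 with rfl | hy2
      · exact absurd hy1 hnu
      · exact hy2

lemma chain'_share_of_all (w : V) {l : List E} (h : ∀ f ∈ l, w ∈ M.inc f) :
    l.Chain' (M.Share) := by
  induction l with
  | nil => exact List.isChain_nil
  | cons a l ih =>
    cases l with
    | nil => exact List.isChain_singleton a
    | cons b l' =>
      show List.IsChain _ _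
      rw [List.isChain_cons_cons]
      exact ⟨⟨w, h a (by simp), h b (by simp)⟩,
        ih (fun f hf => h f (List.mem_cons_of_mem _ hf))⟩

lemma buildList_chain' (M : Multigraph V E) :
    ∀ {u w : V} (p : M.Walk u w) (S : List E),
      (∀ f ∈ S, ∃ y, y ∈ M.inc f ∧ y ∈ p.support) →
      (M.buildList p S).Chain' (M.Share)
  | _, _, .nil v, S, hS => by
    rw [buildList]
    refine chain'_share_of_all v (fun f hf => ?_)
    obtain ⟨y, hy1, hy2⟩ := hS f hf
    simp [Walk.support] at hy2
    rwa [hy2] at hy1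
  | u, _, .cons e h p, S, hS => by
    rw [buildList]
    have hS' : ∀ f ∈ S.filter (fun f => u ∉ M.inc f), ∃ y, y ∈ M.inc f ∧ y ∈ p.support := by
      intro f hf
      obtain ⟨y, hy1, hy2⟩ := hS f (List.mem_of_mem_filter hf)
      have hnu : u ∉ M.inc f := of_decide_eq_true (List.mem_filter.mp hf).2
      refine ⟨y, hy1, ?_⟩
      simp [Walk.support] at hy2
      rcases hy2 with rfl | hy2
      · exact absurd hy1 hnu
      · exact hy2
    show List.IsChain _ _
    rw [List.isChain_append]
    refine ⟨?_, ?_, ?_⟩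
    · refine chain'_share_of_all u (fun f hf => ?_)
      exact of_decide_eq_true (List.mem_filter.mp hf).2
    · rw [List.isChain_cons]
      refine ⟨?_, M.buildList_chain' p _ hS'⟩
      intro y hy
      have hy' : (M.buildList p (S.filter (fun f => u ∉ M.inc f))).head? = some y := hy
      have hvy := M.buildList_head p _ hS' y hy'
      exact ⟨_, (by rw [h]; exact Sym2.mem_mk_right _ _), hvy⟩
    · intro a ha y hy
      simp only [List.head?_cons, Option.mem_def, Option.some.injEq] at hy
      subst hy
      have haA : a ∈ S.filter (fun f => u ∈ M.inc f) := by
        obtain ⟨h1, h2⟩ := List.mem_getLast?_eq_getLast ha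
        rw [h2]; exact List.getLast_mem h1
      exact ⟨u, of_decide_eq_true (List.mem_filter.mp haA).2,
        (by rw [h]; exact Sym2.mem_mk_left _ _)⟩

lemma chain'_adj_of_chain'_share {L : List E} (hnd : L.Nodup)
    (h : L.Chain' (M.Share)) : L.Chain' (M.lineGraph).Adj := by
  induction L with
  | nil => exact List.isChain_nil
  | cons a L ih =>
    cases L with
    | nil => exact List.isChain_singleton a
    | cons b L' =>
      change List.IsChain _ _ at h
      show List.IsChain _ _
      rw [List.isChain_cons_cons] at h ⊢
      refine ⟨⟨?_, h.1⟩, ih (List.nodup_cons.mp hnd).2 h.2⟩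
      rintro rfl
      exact (List.nodup_cons.mp hnd).1 (by simp)

lemma sym2_exists_mem (z : Sym2 V) : ∃ y : V, y ∈ z := by
  induction z using Sym2.ind with
  | _ a b => exact ⟨a, Sym2.mem_mk_left a b⟩

end Multigraph


/-- If a connected multigraph `H` has a spanning closed trail and at least `3`
edges, then its line graph `L(H)` is hamiltonian. -/
theorem stmt16 {V E : Type*} [Fintype E] [DecidableEq E] (M : Multigraph V E)
    (hconn : M.Connected) (hst : M.HasSpanningClosedTrail)
    (hE : 3 ≤ Fintype.card E) :
    (M.lineGraph).IsHamiltonian := by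
  classical
  obtain ⟨v, p, htrail, hspan⟩ := hst
  set S : List E := (Finset.univ.filter (fun e => e ∉ p.edges)).toList with hSdef
  have hSmem : ∀ f : E, f ∈ S ↔ f ∉ p.edges := by
    intro f; simp [hSdef, Finset.mem_toList]
  have hinv : ∀ f ∈ S, ∃ y, y ∈ M.inc f ∧ y ∈ p.support := by
    intro f _
    obtain ⟨y, hy⟩ := Multigraph.sym2_exists_mem (M.inc f)
    exact ⟨y, hy, hspan y⟩
  set L : List E := M.buildList p S with hLdef
  have hperm : L.Perm (p.edges ++ S) := M.buildList_perm p S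
  have hnd : L.Nodup := by
    rw [hperm.nodup_iff]
    refine List.Nodup.append htrail (Finset.nodup_toList _) ?_
    intro a ha haS
    exact (hSmem a).1 haS ha
  have hall : ∀ x : E, x ∈ L := by
    intro x
    rw [hperm.mem_iff, List.mem_append]
    by_cases hx : x ∈ p.edges
    · exact Or.inl hx
    · exact Or.inr ((hSmem x).2 hx)
  have hlen : 3 ≤ L.length := by
    have huniv : L.toFinset = Finset.univ := by
      ext x; simp [hall x]
    have hcard := List.toFinset_card_of_nodup hnd
    rw [huniv, Finset.card_univ] at hcard
    omega
  have hchainS : L.Chain' M.Share := M.buildList_chain' p S hinv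
  have hchain : L.Chain' (M.lineGraph).Adj :=
    Multigraph.chain'_adj_of_chain'_share hnd hchainS
  have hne : L ≠ [] := by
    intro h; rw [h] at hlen; simp at hlen
  have hheadv : v ∈ M.inc (L.head hne) :=
    M.buildList_head p S hinv _ (List.head?_eq_head hne)
  have hlastv : v ∈ M.inc (L.getLast hne) :=
    M.buildList_getLast p S hinv _ (List.getLast?_eq_getLast hne)
  have hlh : L.getLast hne ≠ L.head hne :=
    getLast_ne_head' L hnd (by omega) hne
  apply SimpleGraph.isHamiltonian_of_list _ L hnd hall hlen hchain
  intro h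
  exact ⟨hlh, v, hlastv, hheadv⟩
end
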